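/- arXiv:2201.03143 — 2 statements merged into one kernel-verified Lean document; each statement's English description precedes it below -/
import Mathlib

section
/- Let a, b > 0 be real numbers with a/b irrational. For each pair (m, n) of nonnegative integers, the set {(m', n') ∈ ℤ≥0 × ℤ≥0 : am' + bn' < am + bn} is finite; moreover, the map sending (m, n) to the cardinality of this set is a bijection from ℤ≥0 × ℤ≥0 to ℤ≥0. -/
private lemma ech_f_inj {a b : ℝ} (hb : 0 < b) (hab : Irrational (a / b)) :
    Function.Injective (fun p : ℕ × ℕ => a * p.1 + b * p.2) := by
  rintro ⟨m, n⟩ ⟨m', n'⟩ h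
  simp only at h
  by_cases hm : m = m'
  · subst hm
    have : (n : ℝ) = n' := by
      have h' : b * (n : ℝ) = b * n' := by linarith
      exact mul_left_cancel₀ hb.ne' h'
    have hnn : n = n' := by exact_mod_cast this
    simp [hnn]
  · exfalso
    have hne : ((m : ℝ) - m') ≠ 0 := by
      intro h0
      exact hm (by exact_mod_cast sub_eq_zero.mp h0)
    have key : a / b = ((n' : ℝ) - n) / ((m : ℝ) - m') := by
      rw [div_eq_div_iff hb.ne' hne]
      linarith
    apply hab
    refine ⟨((n' : ℚ) - n) / ((m : ℚ) - m'), ?_⟩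
    rw [key]; push_cast; ring

/-- Let `a, b > 0` with `a/b` irrational.  For each pair `(m, n)` of nonnegative integers, the
set `{(m', n') : a m' + b n' < a m + b n}` is finite; moreover, the map sending `(m, n)` to the
cardinality of this set is a bijection from `ℕ × ℕ` to `ℕ`.  (This encodes that the ECH index
is a bijection from orbit sets of `∂E(a,b)` to nonnegative even integers, with the symplectic
action an increasing function of the ECH index.) -/
theorem ellipsoid_ech_index_bijection (a b : ℝ) (ha : 0 < a) (hb : 0 < b)
    (hab : Irrational (a / b)) :
    (∀ p : ℕ × ℕ,
      {q : ℕ × ℕ | a * q.1 + b * q.2 < a * p.1 + b * p.2}.Finite) ∧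
    Function.Bijective
      (fun p : ℕ × ℕ => {q : ℕ × ℕ | a * q.1 + b * q.2 < a * p.1 + b * p.2}.ncard) := by
  set f : ℕ × ℕ → ℝ := fun p => a * p.1 + b * p.2 with hf
  have hinj : Function.Injective f := ech_f_inj hb hab
  have hmono : ∀ p q : ℕ × ℕ, f p < f q → {r : ℕ × ℕ | f r < f p} ⊆ {r | f r < f q} :=
    fun p q h r hr => lt_trans hr h
  have hfin : ∀ p : ℕ × ℕ, {q : ℕ × ℕ | f q < f p}.Finite := by
    intro p
    have : {q : ℕ × ℕ | f q < f p} ⊆ Set.Iic (⌈f p / a⌉₊) ×ˢ Set.Iic (⌈f p / b⌉₊) := by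
      rintro ⟨x, y⟩ hq
      simp only [Set.mem_setOf_eq, hf] at hq
      have hfp : f ⟨p.1, p.2⟩ = a * ↑p.1 + b * ↑p.2 := rfl
      constructor
      · have h1 : (x : ℝ) ≤ f p / a := by
          rw [le_div_iff₀ ha]
          nlinarith [mul_nonneg hb.le (Nat.cast_nonneg y)]
        have := h1.trans (Nat.le_ceil _)
        exact_mod_cast this
      · have h1 : (y : ℝ) ≤ f p / b := by
          rw [le_div_iff₀ hb]
          nlinarith [mul_nonneg ha.le (Nat.cast_nonneg x)]
        have := h1.trans (Nat.le_ceil _)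
        exact_mod_cast this
    exact Set.Finite.subset ((Set.finite_Iic _).prod (Set.finite_Iic _)) this
  refine ⟨hfin, ?_, ?_⟩
  · -- injective
    intro p q hpq
    simp only at hpq
    rcases lt_trichotomy (f p) (f q) with h | h | h
    · exfalso
      have hss : {r : ℕ × ℕ | f r < f p} ⊂ {r | f r < f q} :=
        ⟨hmono p q h, fun hc => absurd (hc h) (lt_irrefl (f p))⟩
      exact absurd hpq (Set.ncard_lt_ncard hss (hfin q)).ne
    · exact hinj h
    · exfalso
      have hss : {r : ℕ × ℕ | f r < f q} ⊂ {r | f r < f p} :=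
        ⟨hmono q p h, fun hc => absurd (hc h) (lt_irrefl (f q))⟩
      exact absurd hpq.symm (Set.ncard_lt_ncard hss (hfin p)).ne
  · -- surjective
    intro k
    induction k with
    | zero =>
      refine ⟨(0, 0), ?_⟩
      simp only
      convert Set.ncard_empty (ℕ × ℕ)
      ext q
      simp only [Set.mem_setOf_eq, Set.mem_empty_iff_false, iff_false, not_lt, hf]
      norm_num
      positivity
    | succ k ih =>
      obtain ⟨p, hp⟩ := ih
      simp only at hp
      -- find the next point
      set T : Set (ℕ × ℕ) := {q | f p < f q ∧ f q ≤ f p + a} with hT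
      have hTfin : T.Finite := by
        apply (hfin (p.1 + 2, p.2)).subset
        rintro q ⟨_, h2⟩
        simp only [Set.mem_setOf_eq, hf]
        push_cast
        simp only [hf] at h2
        nlinarith
      have hTne : T.Nonempty := ⟨(p.1 + 1, p.2), by
        constructor <;> simp only [hf] <;> push_cast <;> nlinarith⟩
      obtain ⟨p', hp'T, hp'min'⟩ := hTfin.exists_minimalFor f T hTne
      have hp'min : ∀ r ∈ T, f r ≤ f p' → f p' = f r := fun r hr h => le_antisymm (hp'min' hr h) h
      refine ⟨p', ?_⟩
      have hkey : {r : ℕ × ℕ | f r < f p'} = insert p {r | f r < f p} := by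
        ext r
        simp only [Set.mem_setOf_eq, Set.mem_insert_iff]
        constructor
        · intro hr
          rcases lt_trichotomy (f r) (f p) with h | h | h
          · exact Or.inr h
          · exact Or.inl (hinj h)
          · exfalso
            have hrT : r ∈ T := ⟨h, le_of_lt (lt_of_lt_of_le hr hp'T.2)⟩
            have := hp'min r hrT (le_of_lt hr)
            exact absurd (this ▸ hr) (lt_irrefl _)
        · rintro (rfl | h)
          · exact hp'T.1
          · exact h.trans hp'T.1
      change {r : ℕ × ℕ | f r < f p'}.ncard = k + 1
      rw [hkey, Set.ncard_insert_of_notMem (by simp) (hfin p)]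
      exact congrArg (· + 1) hp
end

section
/- Let a > 0 be a real number, let Ω = {(x, y) ∈ ℝ² : x ≥ 0, y ≥ 0, x + y ≤ a}, and let k be a nonnegative integer. Then the minimum of ℓ_Ω(Λ) over all convex integral paths Λ with L̂(Λ) = k + 1 exists and equals d·a, where d is the unique nonnegative integer with d² + d ≤ 2k ≤ d² + 3d. -/
open scoped BigOperators

noncomputable section

/-- The cross product (determinant) of two vectors in `ℝ²`. -/
def cross (u w : ℝ × ℝ) : ℝ := u.1 * w.2 - u.2 * w.1

/-- Given a finite sequence of lattice points `p 0, …, p N`, the associated closed cyclic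
vertex sequence `(0,0), p 0, …, p N` in `ℝ²` (the closing edge going from `p N` back
to the origin). -/
def closedVerts {N : ℕ} (p : Fin (N + 1) → ℤ × ℤ) : Fin (N + 2) → ℝ × ℝ :=
  fun i => Fin.cases (motive := fun _ => ℝ × ℝ) ((0 : ℝ), (0 : ℝ))
    (fun j => (((p j).1 : ℝ), ((p j).2 : ℝ))) i

/-- A convex integral path: a finite sequence `p 0, …, p N` of lattice points in the
nonnegative quadrant with `p 0 = (0, b)` and `p N = (a, 0)` for some nonnegative integers
`a, b`, such that the closed polygonal curve through `(0,0), p 0, …, p N, (0,0)` traverses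
clockwise the boundary of the convex region `R(Λ) = convexHull {(0,0), p 0, …, p N}`:
every vertex lies weakly to the right of every directed edge (so the region bounded by the
path and the two axis segments is convex and the traversal is clockwise), the edges cover
all of the boundary of `R(Λ)`, and no vertex of the path is repeated. -/
structure ConvexIntegralPath where
  N : ℕ
  p : Fin (N + 1) → ℤ × ℤ
  inj : Function.Injective p
  nonneg : ∀ i, 0 ≤ (p i).1 ∧ 0 ≤ (p i).2
  start_on_axis : (p 0).1 = 0
  end_on_axis : (p (Fin.last N)).2 = 0
  clockwise : ∀ i j : Fin (N + 2),
    cross (closedVerts p (i + 1) - closedVerts p i) (closedVerts p j - closedVerts p i) ≤ 0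
  boundary : frontier (convexHull ℝ (Set.range (closedVerts p))) ⊆
    ⋃ i : Fin (N + 2), segment ℝ (closedVerts p i) (closedVerts p (i + 1))

namespace ConvexIntegralPath

/-- The convex region `R(Λ)` bounded by the path `Λ` and the two axis segments, i.e. the
convex hull of `(0,0), p 0, …, p N`. -/
def region (Λ : ConvexIntegralPath) : Set (ℝ × ℝ) :=
  convexHull ℝ (Set.range (closedVerts Λ.p))

/-- `L̂(Λ)`: the number of lattice points in the region `R(Λ)`, including lattice points on
the boundary. -/
def latticePointCount (Λ : ConvexIntegralPath) : ℕ :=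
  {q : ℤ × ℤ | (((q.1 : ℝ), (q.2 : ℝ)) : ℝ × ℝ) ∈ Λ.region}.ncard

end ConvexIntegralPath

/-- `Ω̂ = {μ ∈ ℝ² : (|μ₁|, |μ₂|) ∈ Ω}`. -/
def hatSet (Ω : Set (ℝ × ℝ)) : Set (ℝ × ℝ) := {μ | ((|μ.1|, |μ.2|) : ℝ × ℝ) ∈ Ω}

/-- The support function `‖v‖_Ω* = sup {⟨v, w⟩ : w ∈ Ω̂}`. -/
def dualNorm (Ω : Set (ℝ × ℝ)) (v : ℝ × ℝ) : ℝ :=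
  sSup {x : ℝ | ∃ w ∈ hatSet Ω, x = v.1 * w.1 + v.2 * w.2}

/-- `ℓ_Ω(Λ) = ∑_{i=1}^N ‖p i − p (i−1)‖_Ω*`, the length of the convex integral path `Λ`
measured in the norm `‖·‖_Ω*`. -/
def pathLength (Ω : Set (ℝ × ℝ)) (Λ : ConvexIntegralPath) : ℝ :=
  ∑ i : Fin Λ.N, dualNorm Ω
    ((((Λ.p i.succ).1 : ℝ) - ((Λ.p i.castSucc).1 : ℝ),
      ((Λ.p i.succ).2 : ℝ) - ((Λ.p i.castSucc).2 : ℝ)))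


lemma closedVerts_zero {N : ℕ} (p : Fin (N + 1) → ℤ × ℤ) :
    closedVerts p 0 = ((0:ℝ), (0:ℝ)) := rfl

lemma closedVerts_succ {N : ℕ} (p : Fin (N + 1) → ℤ × ℤ) (j : Fin (N+1)) :
    closedVerts p j.succ = (((p j).1 : ℝ), ((p j).2 : ℝ)) := by
  simp [closedVerts]

/-- combination lemma -/
lemma combo_mem {S : Set (ℝ × ℝ)} (hS : Convex ℝ S) (h0 : ((0:ℝ),(0:ℝ)) ∈ S) {A B : ℝ × ℝ}
    (hA : A ∈ S) (hB : B ∈ S) {α β : ℝ} (hα : 0 ≤ α) (hβ : 0 ≤ β) (hs : α + β ≤ 1) :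
    α • A + β • B ∈ S := by
  rcases eq_or_lt_of_le (add_nonneg hα hβ) with h | h
  · have hα0 : α = 0 := by linarith
    have hβ0 : β = 0 := by linarith
    simp [hα0, hβ0]; exact h0
  · set σ := α + β with hσ
    have hw : (α/σ) • A + (β/σ) • B ∈ S := by
      apply hS hA hB (by positivity) (by positivity)
      field_simp; linarith
    have h2 : σ • ((α/σ) • A + (β/σ) • B) + (1 - σ) • ((0:ℝ),(0:ℝ)) ∈ S :=
      hS hw h0 (le_of_lt h) (by linarith) (by ring)
    convert h2 using 1
    rw [smul_add, smul_smul, smul_smul]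
    have : σ * (α / σ) = α := by field_simp
    have h4 : σ * (β / σ) = β := by field_simp
    rw [this, h4]
    simp

lemma convex_lin_le (u v c : ℝ) : Convex ℝ {z : ℝ × ℝ | u * z.1 + v * z.2 ≤ c} :=
  convex_halfSpace_le (⟨fun x y => by simp; ring, fun s x => by simp; ring⟩ :
    IsLinearMap ℝ (fun z : ℝ × ℝ => u * z.1 + v * z.2)) c

lemma convex_lin_ge (u v c : ℝ) : Convex ℝ {z : ℝ × ℝ | c ≤ u * z.1 + v * z.2} :=
  convex_halfSpace_ge (⟨fun x y => by simp; ring, fun s x => by simp; ring⟩ :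
    IsLinearMap ℝ (fun z : ℝ × ℝ => u * z.1 + v * z.2)) c

/-- the triangle hull description -/
lemma tri_hull (c r : ℤ) (hc : 1 ≤ c) (hr : 1 ≤ r) :
    convexHull ℝ (Set.range (closedVerts (![((0:ℤ),c), (r,(0:ℤ))] : Fin 2 → ℤ × ℤ))) =
      {z : ℝ × ℝ | 0 ≤ z.1 ∧ 0 ≤ z.2 ∧ (c:ℝ) * z.1 + (r:ℝ) * z.2 ≤ (c:ℝ) * (r:ℝ)} := by
  have hc' : (0:ℝ) < c := by exact_mod_cast hc
  have hr' : (0:ℝ) < r := by exact_mod_cast hr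
  set p : Fin 2 → ℤ × ℤ := ![((0:ℤ),c), (r,(0:ℤ))] with hp
  have hv0 : closedVerts p 0 = ((0:ℝ),(0:ℝ)) := rfl
  have hv1 : closedVerts p 1 = ((0:ℝ),(c:ℝ)) := by
    have : (1 : Fin 3) = (0 : Fin 2).succ := rfl
    rw [this, closedVerts_succ]; simp [hp]
  have hv2 : closedVerts p 2 = ((r:ℝ),(0:ℝ)) := by
    have : (2 : Fin 3) = (1 : Fin 2).succ := rfl
    rw [this, closedVerts_succ]; simp [hp]
  apply le_antisymm
  · apply convexHull_min
    · rintro _ ⟨i, rfl⟩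
      fin_cases i
      · show closedVerts p 0 ∈ _
        rw [hv0]; refine ⟨le_refl _, le_refl _, by simp; positivity⟩
      · show closedVerts p 1 ∈ _
        rw [hv1]; refine ⟨le_refl _, by positivity, by simp; linarith [mul_comm (c:ℝ) (r:ℝ)]⟩
      · show closedVerts p 2 ∈ _
        rw [hv2]; refine ⟨by positivity, le_refl _, by simp⟩
    · rintro x hx y hy s t hs ht hst
      obtain ⟨hx1, hx2, h1⟩ := hx
      obtain ⟨hy1, hy2, h2⟩ := hy
      refine ⟨?_, ?_, ?_⟩
      · simp only [Prod.fst_add, Prod.smul_fst, smul_eq_mul]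
        exact add_nonneg (mul_nonneg hs hx1) (mul_nonneg ht hy1)
      · simp only [Prod.snd_add, Prod.smul_snd, smul_eq_mul]
        exact add_nonneg (mul_nonneg hs hx2) (mul_nonneg ht hy2)
      · have : (c:ℝ) * (s • x + t • y).1 + (r:ℝ) * (s • x + t • y).2
            = s * ((c:ℝ) * x.1 + r * x.2) + t * ((c:ℝ) * y.1 + r * y.2) := by
          simp only [Prod.fst_add, Prod.snd_add, Prod.smul_fst, Prod.smul_snd, smul_eq_mul]
          ring
        rw [this]
        calc s * ((c:ℝ) * x.1 + r * x.2) + t * ((c:ℝ) * y.1 + r * y.2)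
            ≤ s * ((c:ℝ)*r) + t * ((c:ℝ)*r) := by
              apply add_le_add <;> apply mul_le_mul_of_nonneg_left <;> assumption
          _ = (c:ℝ)*r := by rw [← add_mul, hst, one_mul]
  · rintro ⟨x, y⟩ ⟨h1, h2, h3⟩
    have hhull : Convex ℝ (convexHull ℝ (Set.range (closedVerts p))) := convex_convexHull _ _
    have m0 : ((0:ℝ),(0:ℝ)) ∈ convexHull ℝ (Set.range (closedVerts p)) :=
      subset_convexHull _ _ ⟨0, hv0⟩
    have m1 : ((0:ℝ),(c:ℝ)) ∈ convexHull ℝ (Set.range (closedVerts p)) :=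
      subset_convexHull _ _ ⟨1, hv1⟩
    have m2 : ((r:ℝ),(0:ℝ)) ∈ convexHull ℝ (Set.range (closedVerts p)) :=
      subset_convexHull _ _ ⟨2, hv2⟩
    have key : (x, y) = (y / c) • ((0:ℝ),(c:ℝ)) + (x / r) • ((r:ℝ),(0:ℝ)) := by
      simp [Prod.ext_iff, smul_eq_mul]
      constructor <;> field_simp
    rw [key]
    apply combo_mem hhull m0 m1 m2 (by positivity) (by positivity)
    rw [div_add_div _ _ (ne_of_gt hc') (ne_of_gt hr'), div_le_one (by positivity)]
    nlinarith


/-- ℓ∞ length of the path, as an integer. -/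
def intLen (Λ : ConvexIntegralPath) : ℤ :=
  ∑ i : Fin Λ.N, max |(Λ.p i.succ).1 - (Λ.p i.castSucc).1| |(Λ.p i.succ).2 - (Λ.p i.castSucc).2|

lemma intLen_nonneg (Λ : ConvexIntegralPath) : 0 ≤ intLen Λ :=
  Finset.sum_nonneg fun i _ => le_trans (abs_nonneg _) (le_max_left _ _)

/-- extension of p to ℕ -/
def pExt (Λ : ConvexIntegralPath) (n : ℕ) : ℤ × ℤ := Λ.p ⟨min n Λ.N, by omega⟩

lemma pExt_eq (Λ : ConvexIntegralPath) {n : ℕ} (h : n ≤ Λ.N) :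
    pExt Λ n = Λ.p ⟨n, by omega⟩ := by simp [pExt, Nat.min_eq_left h]

lemma intLen_eq (Λ : ConvexIntegralPath) :
    intLen Λ = ∑ j ∈ Finset.range Λ.N,
      max |(pExt Λ (j+1)).1 - (pExt Λ j).1| |(pExt Λ (j+1)).2 - (pExt Λ j).2| := by
  rw [intLen, Finset.sum_range fun j => _]
  apply Finset.sum_congr rfl
  intro i _
  rw [pExt_eq Λ (by omega : i.val + 1 ≤ Λ.N), pExt_eq Λ (by omega : i.val ≤ Λ.N)]
  rfl

/-- key vertex bound -/
lemma vertex_bound (Λ : ConvexIntegralPath) (i : Fin (Λ.N + 1)) :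
    (Λ.p i).1 + (Λ.p i).2 ≤ intLen Λ := by
  set M : ℕ → ℤ := fun j =>
    max |(pExt Λ (j+1)).1 - (pExt Λ j).1| |(pExt Λ (j+1)).2 - (pExt Λ j).2| with hM
  have hsum : intLen Λ = ∑ j ∈ Finset.range Λ.N, M j := intLen_eq Λ
  have hile : i.val ≤ Λ.N := Nat.lt_succ_iff.mp i.isLt
  have hpi : pExt Λ i.val = Λ.p i := by rw [pExt_eq Λ hile]

  have hx : (Λ.p i).1 = ∑ j ∈ Finset.range i.val, ((pExt Λ (j+1)).1 - (pExt Λ j).1) := by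
    rw [Finset.sum_range_sub (fun n => (pExt Λ n).1), hpi]
    rw [pExt_eq Λ (Nat.zero_le _)]
    have : (⟨0, by omega⟩ : Fin (Λ.N+1)) = 0 := rfl
    rw [this, Λ.start_on_axis]; ring
  have hy : (Λ.p i).2 = ∑ j ∈ Finset.Ico i.val Λ.N, ((pExt Λ j).2 - (pExt Λ (j+1)).2) := by
    have hle : i.val ≤ Λ.N := Nat.lt_succ_iff.mp i.isLt
    have := Finset.sum_Ico_eq_sub (fun n => ((pExt Λ n).2 - (pExt Λ (n+1)).2)) hle
    rw [this, Finset.sum_range_sub' (fun n => (pExt Λ n).2),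
      Finset.sum_range_sub' (fun n => (pExt Λ n).2), hpi]
    have hN : pExt Λ Λ.N = Λ.p (Fin.last Λ.N) := pExt_eq Λ le_rfl
    rw [hN, Λ.end_on_axis, pExt_eq Λ (Nat.zero_le _)]
    have : (⟨0, by omega⟩ : Fin (Λ.N+1)) = 0 := rfl
    rw [this]; ring
  have hx' : (Λ.p i).1 ≤ ∑ j ∈ Finset.range i.val, M j := by
    rw [hx]; apply Finset.sum_le_sum; intro j _
    exact le_trans (le_abs_self _) (le_max_left _ _)
  have hy' : (Λ.p i).2 ≤ ∑ j ∈ Finset.Ico i.val Λ.N, M j := by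
    rw [hy]; apply Finset.sum_le_sum; intro j _
    exact le_trans (by rw [abs_sub_comm]; exact le_abs_self _) (le_max_right _ _)
  have : ∑ j ∈ Finset.range i.val, M j + ∑ j ∈ Finset.Ico i.val Λ.N, M j
      = ∑ j ∈ Finset.range Λ.N, M j := by
    rw [Finset.range_eq_Ico, Finset.range_eq_Ico]
    exact Finset.sum_Ico_consecutive M (Nat.zero_le _) hile
  omega

/-- every point of the region satisfies triangle inequalities -/
lemma region_subset (Λ : ConvexIntegralPath) :
    Λ.region ⊆ {z : ℝ × ℝ | 0 ≤ z.1 ∧ 0 ≤ z.2 ∧ z.1 + z.2 ≤ (intLen Λ : ℝ)} := by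
  apply convexHull_min
  · rintro _ ⟨i, rfl⟩
    induction i using Fin.cases with
    | zero => simp [closedVerts, intLen_nonneg Λ]
    | succ j =>
      simp only [closedVerts, Fin.cases_succ, Set.mem_setOf_eq]
      have h1 := (Λ.nonneg j).1
      have h2 := (Λ.nonneg j).2
      have h3 := vertex_bound Λ j
      refine ⟨by exact_mod_cast h1, by exact_mod_cast h2, by exact_mod_cast h3⟩
  · have c1 : Convex ℝ {z : ℝ × ℝ | 0 ≤ z.1} :=
      convex_halfSpace_ge (⟨fun _ _ => rfl, fun _ _ => rfl⟩ : IsLinearMap ℝ (Prod.fst : ℝ × ℝ → ℝ)) 0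
    have c2 : Convex ℝ {z : ℝ × ℝ | 0 ≤ z.2} :=
      convex_halfSpace_ge (⟨fun _ _ => rfl, fun _ _ => rfl⟩ : IsLinearMap ℝ (Prod.snd : ℝ × ℝ → ℝ)) 0
    have c3 : Convex ℝ {z : ℝ × ℝ | z.1 + z.2 ≤ (intLen Λ : ℝ)} :=
      convex_halfSpace_le (⟨fun _ _ => by simp; ring, fun _ _ => by simp; ring⟩ :
        IsLinearMap ℝ (fun z : ℝ × ℝ => z.1 + z.2)) _
    exact fun x hx y hy s t hs ht hst => ⟨c1 hx.1 hy.1 hs ht hst, c2 hx.2.1 hy.2.1 hs ht hst,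
      c3 hx.2.2 hy.2.2 hs ht hst⟩

def Tset (m : ℤ) : Set (ℤ × ℤ) := {q | 0 ≤ q.1 ∧ 0 ≤ q.2 ∧ q.1 + q.2 ≤ m}
def Dset (j : ℤ) : Set (ℤ × ℤ) := {q | 0 ≤ q.1 ∧ 0 ≤ q.2 ∧ q.1 + q.2 = j}

lemma Tset_finite (m : ℤ) : (Tset m).Finite := by
  apply Set.Finite.subset ((Set.finite_Icc (0:ℤ) m).prod (Set.finite_Icc (0:ℤ) m))
  rintro ⟨x, y⟩ ⟨h1, h2, h3⟩
  exact ⟨⟨h1, by omega⟩, ⟨h2, by omega⟩⟩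

lemma Dset_finite (j : ℤ) : (Dset j).Finite := by
  apply Set.Finite.subset (Tset_finite j)
  rintro ⟨x, y⟩ ⟨h1, h2, h3⟩
  exact ⟨h1, h2, le_of_eq h3⟩

lemma Dset_ncard (j : ℤ) (hj : 0 ≤ j) : (Dset j).ncard = j.toNat + 1 := by
  have : Dset j = (fun x : ℤ => (x, j - x)) '' (Set.Icc 0 j) := by
    ext ⟨x, y⟩
    simp only [Dset, Set.mem_setOf_eq, Set.mem_image, Set.mem_Icc]
    constructor
    · rintro ⟨h1, h2, h3⟩; exact ⟨x, ⟨h1, by omega⟩, by simp; omega⟩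
    · rintro ⟨z, ⟨hz1, hz2⟩, h⟩
      obtain ⟨rfl, rfl⟩ := Prod.mk.injEq .. ▸ h
      refine ⟨hz1, by omega, by omega⟩
  rw [this, Set.ncard_image_of_injective _ (fun u v h => by simpa using (Prod.mk.injEq .. ▸ h).1)]
  rw [← Finset.coe_Icc, Set.ncard_coe_finset]
  rw [Int.card_Icc]
  omega

lemma Tset_ncard (m : ℕ) : 2 * (Tset (m : ℤ)).ncard = (m + 1) * (m + 2) := by
  induction m with
  | zero =>
    have : Tset 0 = {((0:ℤ), (0:ℤ))} := by
      ext ⟨x, y⟩; simp only [Tset, Set.mem_setOf_eq, Set.mem_singleton_iff, Prod.mk.injEq]; omega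
    simp [this]
  | succ n ih =>
    have hsplit : Tset ((n+1 : ℕ) : ℤ) = Tset (n : ℤ) ∪ Dset ((n:ℤ)+1) := by
      ext ⟨x, y⟩
      simp only [Tset, Dset, Set.mem_setOf_eq, Set.mem_union]
      push_cast
      omega
    have hdisj : Disjoint (Tset (n : ℤ)) (Dset ((n:ℤ)+1)) := by
      rw [Set.disjoint_left]
      rintro ⟨x, y⟩ ⟨h1, h2, h3⟩ ⟨g1, g2, g3⟩
      omega
    rw [hsplit, Set.ncard_union_eq hdisj (Tset_finite _) (Dset_finite _),
      Dset_ncard _ (by omega)]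
    have : ((n:ℤ)+1).toNat = n + 1 := by omega
    rw [this]
    nlinarith [ih]

lemma dualNorm_tri (a : ℝ) (ha : 0 < a) (v : ℝ × ℝ) :
    dualNorm {v : ℝ × ℝ | 0 ≤ v.1 ∧ 0 ≤ v.2 ∧ v.1 + v.2 ≤ a} v = a * max |v.1| |v.2| := by
  apply IsGreatest.csSup_eq
  constructor
  · rcases le_total |v.1| |v.2| with h | h
    · refine ⟨(0, if 0 ≤ v.2 then a else -a), ?_, ?_⟩
      · simp only [hatSet, Set.mem_setOf_eq]
        constructor
        · simp
        constructor
        · split <;> simp [abs_of_nonneg, ha.le] <;> rw [abs_of_nonpos] <;> linarith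
        · split <;> [skip; skip] <;> simp [abs_of_nonneg ha.le] <;>
            rw [abs_of_nonpos (by linarith)] <;> simp
      · rw [max_eq_right h]
        split <;> rename_i hs
        · rw [abs_of_nonneg hs]; ring
        · rw [abs_of_neg (lt_of_not_ge hs)]; ring
    · refine ⟨(if 0 ≤ v.1 then a else -a, 0), ?_, ?_⟩
      · simp only [hatSet, Set.mem_setOf_eq]
        refine ⟨?_, by simp, ?_⟩
        · split <;> simp [abs_of_nonneg, ha.le] <;> rw [abs_of_nonpos] <;> linarith
        · split <;> [skip; skip] <;> simp [abs_of_nonneg ha.le] <;>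
            rw [abs_of_nonpos (by linarith)] <;> simp
      · rw [max_eq_left h]
        split <;> rename_i hs
        · rw [abs_of_nonneg hs]; ring
        · rw [abs_of_neg (lt_of_not_ge hs)]; ring
  · rintro x ⟨w, hw, rfl⟩
    simp only [hatSet, Set.mem_setOf_eq] at hw
    obtain ⟨h1, h2, h3⟩ := hw
    have : v.1 * w.1 + v.2 * w.2 ≤ |v.1| * |w.1| + |v.2| * |w.2| := by
      have a1 : v.1 * w.1 ≤ |v.1| * |w.1| := (le_abs_self _).trans (le_of_eq (abs_mul _ _))
      have a2 : v.2 * w.2 ≤ |v.2| * |w.2| := (le_abs_self _).trans (le_of_eq (abs_mul _ _))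
      linarith
    refine this.trans ?_
    have hm1 : |v.1| ≤ max |v.1| |v.2| := le_max_left _ _
    have hm2 : |v.2| ≤ max |v.1| |v.2| := le_max_right _ _
    nlinarith [abs_nonneg w.1, abs_nonneg w.2, abs_nonneg v.1, abs_nonneg v.2]

lemma fin3_cases (i : Fin 3) : i = 0 ∨ i = 1 ∨ i = 2 := by revert i; decide
lemma fin4_cases (i : Fin 4) : i = 0 ∨ i = 1 ∨ i = 2 ∨ i = 3 := by revert i; decide

section TriPath
variable (c r : ℤ)

def triP : Fin 2 → ℤ × ℤ := ![((0:ℤ),c), (r,(0:ℤ))]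

lemma triV0 : closedVerts (triP c r) 0 = ((0:ℝ),(0:ℝ)) := rfl
lemma triV1 : closedVerts (triP c r) 1 = ((0:ℝ),(c:ℝ)) := by
  have : (1 : Fin 3) = (0 : Fin 2).succ := rfl
  rw [this, closedVerts_succ]; simp [triP]
lemma triV2 : closedVerts (triP c r) 2 = ((r:ℝ),(0:ℝ)) := by
  have : (2 : Fin 3) = (1 : Fin 2).succ := rfl
  rw [this, closedVerts_succ]; simp [triP]

def triPath (hc : 1 ≤ c) (hr : 1 ≤ r) (hcr : c ≤ r) : ConvexIntegralPath where
  N := 1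
  p := triP c r
  inj := by
    intro i j h
    fin_cases i <;> fin_cases j <;> simp_all [triP] <;> omega
  nonneg := by
    intro i; fin_cases i <;> constructor <;> simp [triP] <;> omega
  start_on_axis := by simp [triP]
  end_on_axis := by simp [triP, Fin.last]
  clockwise := by
    have hc' : (0:ℝ) ≤ c := by exact_mod_cast le_trans zero_le_one hc
    have hr' : (0:ℝ) ≤ r := by exact_mod_cast le_trans zero_le_one hr
    intro i j
    rcases fin3_cases i with rfl|rfl|rfl <;> rcases fin3_cases j with rfl|rfl|rfl <;>
      simp only [show ((0:Fin 3)+1) = 1 from rfl, show ((1:Fin 3)+1) = 2 from rfl,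
        show ((2:Fin 3)+1) = 0 from rfl, triV0, triV1, triV2, cross,
        Prod.fst_sub, Prod.snd_sub] <;>
      nlinarith
  boundary := by
    have hc' : (0:ℝ) < c := by exact_mod_cast hc
    have hr' : (0:ℝ) < r := by exact_mod_cast hr
    have hH := tri_hull c r hc hr
    rw [show (![((0:ℤ),c), (r,(0:ℤ))] : Fin 2 → ℤ × ℤ) = triP c r from rfl] at hH
    set S := convexHull ℝ (Set.range (closedVerts (triP c r))) with hS
    have hclosed : IsClosed S := (Set.finite_range _).isClosed_convexHull (𝕜 := ℝ)
    set U : Set (ℝ × ℝ) := {z | 0 < z.1 ∧ 0 < z.2 ∧ (c:ℝ) * z.1 + (r:ℝ) * z.2 < (c:ℝ)*(r:ℝ)}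
      with hU
    have hUopen : IsOpen U := by
      apply IsOpen.inter (isOpen_lt continuous_const continuous_fst)
      apply IsOpen.inter (isOpen_lt continuous_const continuous_snd)
      exact isOpen_lt (Continuous.add (continuous_const.mul continuous_fst)
        (continuous_const.mul continuous_snd)) continuous_const
    have hUS : U ⊆ S := by
      rw [hH]
      rintro z ⟨h1, h2, h3⟩
      exact ⟨le_of_lt h1, le_of_lt h2, le_of_lt h3⟩
    have hfr : frontier S ⊆ S \ U := by
      intro z hz
      refine ⟨hclosed.closure_eq ▸ hz.1, fun hzU => hz.2 (interior_maximal hUS hUopen hzU)⟩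
    intro z hz
    obtain ⟨hzS, hzU⟩ := hfr hz
    rw [hH] at hzS
    obtain ⟨h1, h2, h3⟩ := hzS
    rw [hU, Set.mem_setOf_eq] at hzU
    push_neg at hzU
    rcases eq_or_lt_of_le h1 with he1 | he1
    · apply Set.mem_iUnion.2 ⟨0, ?_⟩
      rw [show ((0:Fin 3)+1) = 1 from rfl, triV0, triV1, segment_eq_image]
      refine ⟨z.2 / c, ⟨by positivity, by rw [div_le_one hc']; nlinarith⟩, ?_⟩
      have hzz : z = (z.1, z.2) := rfl
      rw [hzz, ← he1]
      simp [Prod.ext_iff, smul_eq_mul]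
      field_simp
    rcases eq_or_lt_of_le h2 with he2 | he2
    · apply Set.mem_iUnion.2 ⟨2, ?_⟩
      rw [show ((2:Fin 3)+1) = 0 from rfl, triV2, triV0, segment_eq_image]
      refine ⟨1 - z.1 / r, ⟨by rw [sub_nonneg, div_le_one hr']; nlinarith,
        by linarith [div_nonneg h1 hr'.le]⟩, ?_⟩
      have hzz : z = (z.1, z.2) := rfl
      rw [hzz, ← he2]
      simp [Prod.ext_iff, smul_eq_mul]
      field_simp
    have he3 : (c:ℝ) * z.1 + (r:ℝ) * z.2 = (c:ℝ)*(r:ℝ) := le_antisymm h3 (hzU he1 he2)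
    apply Set.mem_iUnion.2 ⟨1, ?_⟩
    rw [show ((1:Fin 3)+1) = 2 from rfl, triV1, triV2, segment_eq_image]
    refine ⟨z.1 / r, ⟨by positivity, by rw [div_le_one hr']; nlinarith⟩, ?_⟩
    have hzz : z = (z.1, z.2) := rfl
    rw [hzz]
    simp [Prod.ext_iff, smul_eq_mul]
    constructor
    · field_simp
    · field_simp; nlinarith

end TriPath


section QuadPath
variable (d t : ℤ)

def quadP : Fin 3 → ℤ × ℤ := ![((0:ℤ),d-1), (t,d-t), (d,(0:ℤ))]

lemma quadV0 : closedVerts (quadP d t) 0 = ((0:ℝ),(0:ℝ)) := rfl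
lemma quadV1 : closedVerts (quadP d t) 1 = ((0:ℝ),(d:ℝ)-1) := by
  have : (1 : Fin 4) = (0 : Fin 3).succ := rfl
  rw [this, closedVerts_succ]; simp [quadP]
lemma quadV2 : closedVerts (quadP d t) 2 = ((t:ℝ),(d:ℝ)-(t:ℝ)) := by
  have : (2 : Fin 4) = (1 : Fin 3).succ := rfl
  rw [this, closedVerts_succ]; simp [quadP]
lemma quadV3 : closedVerts (quadP d t) 3 = ((d:ℝ),(0:ℝ)) := by
  have : (3 : Fin 4) = (2 : Fin 3).succ := rfl
  rw [this, closedVerts_succ]; simp [quadP]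

def quadH : Set (ℝ × ℝ) :=
  {z : ℝ × ℝ | 0 ≤ z.1 ∧ 0 ≤ z.2 ∧ ((t:ℝ)-1) * z.1 + (t:ℝ) * z.2 ≤ (t:ℝ) * ((d:ℝ)-1) ∧
    z.1 + z.2 ≤ (d:ℝ)}

lemma quad_hull (ht : 1 ≤ t) (htd : t ≤ d - 1) :
    convexHull ℝ (Set.range (closedVerts (quadP d t))) = quadH d t := by
  have ht' : (1:ℝ) ≤ t := by exact_mod_cast ht
  have htd' : (t:ℝ) ≤ (d:ℝ) - 1 := by
    have : (t:ℝ) ≤ ((d-1 : ℤ):ℝ) := by exact_mod_cast htd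
    push_cast at this; linarith
  have hd' : (2:ℝ) ≤ d := by linarith
  apply le_antisymm
  · apply convexHull_min
    · rintro _ ⟨i, rfl⟩
      rcases fin4_cases i with rfl|rfl|rfl|rfl
      · rw [quadV0]
        refine ⟨le_refl _, le_refl _, by simp <;> nlinarith, by simp <;> linarith⟩
      · rw [quadV1]
        refine ⟨le_refl _, by simp <;> linarith, by simp <;> nlinarith, by simp <;> linarith⟩
      · rw [quadV2]
        refine ⟨by simp <;> linarith, by simp <;> linarith, by simp <;> nlinarith,
          by simp <;> linarith⟩
      · rw [quadV3]
        refine ⟨by simp <;> linarith, le_refl _, by simp <;> nlinarith, by simp <;> linarith⟩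
    · rintro x hx y hy s u hs hu hsu
      obtain ⟨hx1, hx2, hx3, hx4⟩ := hx
      obtain ⟨hy1, hy2, hy3, hy4⟩ := hy
      have e1 : (s • x + u • y).1 = s * x.1 + u * y.1 := by
        simp [Prod.fst_add, Prod.smul_fst, smul_eq_mul]
      have e2 : (s • x + u • y).2 = s * x.2 + u * y.2 := by
        simp [Prod.snd_add, Prod.smul_snd, smul_eq_mul]
      refine ⟨?_, ?_, ?_, ?_⟩
      · rw [e1]; exact add_nonneg (mul_nonneg hs hx1) (mul_nonneg hu hy1)
      · rw [e2]; exact add_nonneg (mul_nonneg hs hx2) (mul_nonneg hu hy2)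
      · rw [e1, e2]
        nlinarith [add_le_add (mul_le_mul_of_nonneg_left hx3 hs)
            (mul_le_mul_of_nonneg_left hy3 hu),
          congrArg (· * ((t:ℝ)*((d:ℝ)-1))) hsu]
      · rw [e1, e2]
        nlinarith [add_le_add (mul_le_mul_of_nonneg_left hx4 hs)
            (mul_le_mul_of_nonneg_left hy4 hu),
          congrArg (· * (d:ℝ)) hsu]
  · rintro ⟨x, y⟩ ⟨h1, h2, h3, h4⟩
    dsimp only at h1 h2 h3 h4
    have ht0 : (0:ℝ) < t := by linarith
    have hd10 : (0:ℝ) < (d:ℝ) - 1 := by linarith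
    have hdt0 : (0:ℝ) < (d:ℝ) - t := by linarith
    have hd0 : (0:ℝ) < d := by linarith
    have net : (t:ℝ) ≠ 0 := ne_of_gt ht0
    have ned1 : (d:ℝ) - 1 ≠ 0 := ne_of_gt hd10
    have nedt : (d:ℝ) - t ≠ 0 := ne_of_gt hdt0
    have ned : (d:ℝ) ≠ 0 := ne_of_gt hd0
    set S := convexHull ℝ (Set.range (closedVerts (quadP d t))) with hS
    have hhull : Convex ℝ S := convex_convexHull _ _
    have m0 : ((0:ℝ),(0:ℝ)) ∈ S := subset_convexHull _ _ ⟨0, quadV0 d t⟩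
    have m1 : ((0:ℝ),(d:ℝ)-1) ∈ S := subset_convexHull _ _ ⟨1, quadV1 d t⟩
    have m2 : ((t:ℝ),(d:ℝ)-(t:ℝ)) ∈ S := subset_convexHull _ _ ⟨2, quadV2 d t⟩
    have m3 : ((d:ℝ),(0:ℝ)) ∈ S := subset_convexHull _ _ ⟨3, quadV3 d t⟩
    rcases le_total (((d:ℝ)-t) * x) ((t:ℝ) * y) with hside | hside
    · have key : ((x:ℝ), y) = (((t:ℝ)*y - ((d:ℝ)-t)*x)/((t:ℝ)*((d:ℝ)-1))) • ((0:ℝ),(d:ℝ)-1)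
          + (x/(t:ℝ)) • ((t:ℝ),(d:ℝ)-(t:ℝ)) := by
        rw [Prod.ext_iff]
        constructor <;>
          simp only [Prod.fst_add, Prod.snd_add, Prod.smul_fst, Prod.smul_snd, smul_eq_mul] <;>
          field_simp <;> ring
      rw [key]
      apply combo_mem hhull m0 m1 m2
      · exact div_nonneg (by linarith) (by positivity)
      · exact div_nonneg h1 ht0.le
      · rw [div_add_div _ _ (by positivity) net, div_le_one (by positivity)]
        nlinarith [mul_le_mul_of_nonneg_left h3 ht0.le]
    · have key : ((x:ℝ), y) = (y/((d:ℝ)-t)) • ((t:ℝ),(d:ℝ)-(t:ℝ))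
          + ((((d:ℝ)-t)*x - (t:ℝ)*y)/((d:ℝ)*((d:ℝ)-t))) • ((d:ℝ),(0:ℝ)) := by
        rw [Prod.ext_iff]
        constructor <;>
          simp only [Prod.fst_add, Prod.snd_add, Prod.smul_fst, Prod.smul_snd, smul_eq_mul] <;>
          field_simp <;> ring
      rw [key]
      apply combo_mem hhull m0 m2 m3
      · exact div_nonneg h2 hdt0.le
      · exact div_nonneg (by linarith) (by positivity)
      · rw [div_add_div _ _ nedt (by positivity), div_le_one (by positivity)]
        have hb : ((d:ℝ)-t)*(x+y) ≤ ((d:ℝ)-t)*d := mul_le_mul_of_nonneg_left h4 hdt0.le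
        nlinarith [mul_le_mul_of_nonneg_left hb hdt0.le]

end QuadPath

lemma quadP_0 (d t : ℤ) : quadP d t 0 = (0, d-1) := rfl
lemma quadP_1 (d t : ℤ) : quadP d t 1 = (t, d-t) := rfl
lemma quadP_2 (d t : ℤ) : quadP d t 2 = (d, 0) := rfl

def quadPath (d t : ℤ) (ht : 1 ≤ t) (htd : t ≤ d - 1) : ConvexIntegralPath where
  N := 2
  p := quadP d t
  inj := by
    intro i j h
    rcases fin3_cases i with rfl|rfl|rfl <;> rcases fin3_cases j with rfl|rfl|rfl <;>
      first
        | rfl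
        | (exfalso
           simp only [quadP_0, quadP_1, quadP_2, Prod.mk.injEq] at h
           omega)
  nonneg := by
    intro i
    rcases fin3_cases i with rfl|rfl|rfl <;>
      (constructor <;> (simp only [quadP_0, quadP_1, quadP_2]; omega))
  start_on_axis := rfl
  end_on_axis := rfl
  clockwise := by
    have ht' : (1:ℝ) ≤ t := by exact_mod_cast ht
    have htd' : (t:ℝ) ≤ (d:ℝ) - 1 := by
      have : (t:ℝ) ≤ ((d-1 : ℤ):ℝ) := by exact_mod_cast htd
      push_cast at this; linarith
    intro i j
    rcases fin4_cases i with rfl|rfl|rfl|rfl <;> rcases fin4_cases j with rfl|rfl|rfl|rfl <;>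
      simp only [show ((0:Fin 4)+1) = 1 from rfl, show ((1:Fin 4)+1) = 2 from rfl,
        show ((2:Fin 4)+1) = 3 from rfl, show ((3:Fin 4)+1) = 0 from rfl,
        quadV0, quadV1, quadV2, quadV3, cross, Prod.fst_sub, Prod.snd_sub] <;>
      nlinarith
  boundary := by
    have ht' : (1:ℝ) ≤ t := by exact_mod_cast ht
    have htd' : (t:ℝ) ≤ (d:ℝ) - 1 := by
      have : (t:ℝ) ≤ ((d-1 : ℤ):ℝ) := by exact_mod_cast htd
      push_cast at this; linarith
    have ht0 : (0:ℝ) < t := by linarith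
    have hd10 : (0:ℝ) < (d:ℝ) - 1 := by linarith
    have hdt0 : (0:ℝ) < (d:ℝ) - t := by linarith
    have hd0 : (0:ℝ) < d := by linarith
    have hH := quad_hull d t ht htd
    set S := convexHull ℝ (Set.range (closedVerts (quadP d t))) with hS
    have hclosed : IsClosed S := (Set.finite_range _).isClosed_convexHull (𝕜 := ℝ)
    set U : Set (ℝ × ℝ) := {z | 0 < z.1 ∧ 0 < z.2 ∧
      ((t:ℝ)-1) * z.1 + (t:ℝ) * z.2 < (t:ℝ) * ((d:ℝ)-1) ∧ z.1 + z.2 < (d:ℝ)} with hU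
    have hUopen : IsOpen U := by
      apply IsOpen.inter (isOpen_lt continuous_const continuous_fst)
      apply IsOpen.inter (isOpen_lt continuous_const continuous_snd)
      apply IsOpen.inter
      · exact isOpen_lt (Continuous.add (continuous_const.mul continuous_fst)
          (continuous_const.mul continuous_snd)) continuous_const
      · exact isOpen_lt (continuous_fst.add continuous_snd) continuous_const
    have hUS : U ⊆ S := by
      rw [hH]
      rintro z ⟨h1, h2, h3, h4⟩
      exact ⟨le_of_lt h1, le_of_lt h2, le_of_lt h3, le_of_lt h4⟩
    have hfr : frontier S ⊆ S \ U := by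
      intro z hz
      refine ⟨hclosed.closure_eq ▸ hz.1, fun hzU => hz.2 (interior_maximal hUS hUopen hzU)⟩
    intro z hz
    obtain ⟨hzS, hzU⟩ := hfr hz
    rw [hH] at hzS
    obtain ⟨h1, h2, h3, h4⟩ := hzS
    rw [hU, Set.mem_setOf_eq] at hzU
    push_neg at hzU
    rcases eq_or_lt_of_le h1 with he1 | he1
    · -- z.1 = 0 : edge 0 from (0,0) to (0,d-1)
      apply Set.mem_iUnion.2 ⟨0, ?_⟩
      rw [show ((0:Fin 4)+1) = 1 from rfl, quadV0, quadV1, segment_eq_image]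
      refine ⟨z.2 / ((d:ℝ)-1), ⟨by positivity, by rw [div_le_one hd10]; nlinarith⟩, ?_⟩
      have hzz : z = (z.1, z.2) := rfl
      rw [hzz, ← he1]
      simp only [Prod.ext_iff, Prod.fst_add, Prod.snd_add, Prod.smul_fst, Prod.smul_snd,
        smul_eq_mul]
      constructor
      · simp
      · simp; field_simp
    rcases eq_or_lt_of_le h2 with he2 | he2
    · -- z.2 = 0 : edge 3 from (d,0) to (0,0)
      apply Set.mem_iUnion.2 ⟨3, ?_⟩
      rw [show ((3:Fin 4)+1) = 0 from rfl, quadV3, quadV0, segment_eq_image]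
      refine ⟨1 - z.1 / d, ⟨by rw [sub_nonneg, div_le_one hd0]; linarith,
        by linarith [div_nonneg h1 hd0.le]⟩, ?_⟩
      have hzz : z = (z.1, z.2) := rfl
      rw [hzz, ← he2]
      simp only [Prod.ext_iff, Prod.fst_add, Prod.snd_add, Prod.smul_fst, Prod.smul_snd,
        smul_eq_mul]
      constructor
      · field_simp; ring
      · simp
    rcases eq_or_lt_of_le h3 with he3 | he3
    · -- on line L1 : edge 1 from (0,d-1) to (t,d-t)
      apply Set.mem_iUnion.2 ⟨1, ?_⟩
      rw [show ((1:Fin 4)+1) = 2 from rfl, quadV1, quadV2, segment_eq_image]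
      refine ⟨z.1 / t, ⟨by positivity, by rw [div_le_one ht0]; nlinarith⟩, ?_⟩
      have hzz : z = (z.1, z.2) := rfl
      rw [hzz]
      simp only [Prod.ext_iff, Prod.fst_add, Prod.snd_add, Prod.smul_fst, Prod.smul_snd,
        smul_eq_mul]
      constructor
      · field_simp; ring
      · field_simp; nlinarith [he3]
    · -- L2 equality : edge 2 from (t,d-t) to (d,0)
      have he4 : z.1 + z.2 = (d:ℝ) := le_antisymm h4 (hzU he1 he2 he3)
      apply Set.mem_iUnion.2 ⟨2, ?_⟩
      rw [show ((2:Fin 4)+1) = 3 from rfl, quadV2, quadV3, segment_eq_image]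
      have hzt : (t:ℝ) ≤ z.1 := by nlinarith
      refine ⟨(z.1 - t) / ((d:ℝ)-t), ⟨div_nonneg (by linarith) hdt0.le, by rw [div_le_one hdt0]; nlinarith⟩, ?_⟩
      have hzz : z = (z.1, z.2) := rfl
      rw [hzz]
      simp only [Prod.ext_iff, Prod.fst_add, Prod.snd_add, Prod.smul_fst, Prod.smul_snd,
        smul_eq_mul]
      constructor
      · field_simp; ring
      · field_simp; nlinarith [he4]

section PointSeg

def pointP : Fin 1 → ℤ × ℤ := ![((0:ℤ),(0:ℤ))]

lemma pointV (i : Fin 2) : closedVerts pointP i = ((0:ℝ),(0:ℝ)) := by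
  induction i using Fin.cases with
  | zero => rfl
  | succ j => rw [closedVerts_succ]; simp [pointP]

lemma pointRange : Set.range (closedVerts pointP) = {((0:ℝ),(0:ℝ))} := by
  apply Set.eq_singleton_iff_unique_mem.2
  exact ⟨⟨0, rfl⟩, by rintro _ ⟨i, rfl⟩; rw [pointV]⟩

def pointPath : ConvexIntegralPath where
  N := 0
  p := pointP
  inj := fun i j _ => Fin.ext (by omega)
  nonneg := by
    intro i
    have hi : i = 0 := Fin.ext (by omega)
    subst hi
    exact ⟨le_refl _, le_refl _⟩
  start_on_axis := rfl
  end_on_axis := rfl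
  clockwise := by
    intro i j
    rw [pointV, pointV, pointV]
    simp [cross]
  boundary := by
    rw [pointRange, convexHull_singleton]
    intro z hz
    have h1 := hz.1
    rw [isClosed_singleton.closure_eq] at h1
    apply Set.mem_iUnion.2 ⟨0, ?_⟩
    rw [pointV, pointV]
    rw [Set.mem_singleton_iff.1 h1]
    exact left_mem_segment _ _ _

def segP : Fin 2 → ℤ × ℤ := ![((0:ℤ),(0:ℤ)), ((1:ℤ),(0:ℤ))]

lemma segV0 : closedVerts segP 0 = ((0:ℝ),(0:ℝ)) := rfl
lemma segV1 : closedVerts segP 1 = ((0:ℝ),(0:ℝ)) := by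
  have : (1 : Fin 3) = (0 : Fin 2).succ := rfl
  rw [this, closedVerts_succ]; simp [segP]
lemma segV2 : closedVerts segP 2 = ((1:ℝ),(0:ℝ)) := by
  have : (2 : Fin 3) = (1 : Fin 2).succ := rfl
  rw [this, closedVerts_succ]; simp [segP]

lemma segRange : Set.range (closedVerts segP) = {((0:ℝ),(0:ℝ)), ((1:ℝ),(0:ℝ))} := by
  ext z
  constructor
  · rintro ⟨i, rfl⟩
    rcases fin3_cases i with rfl|rfl|rfl
    · rw [segV0]; exact Or.inl rfl
    · rw [segV1]; exact Or.inl rfl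
    · rw [segV2]; exact Or.inr rfl
  · rintro (rfl|rfl)
    exacts [⟨0, segV0⟩, ⟨2, segV2⟩]

lemma segHull : convexHull ℝ (Set.range (closedVerts segP)) =
    segment ℝ ((0:ℝ),(0:ℝ)) ((1:ℝ),(0:ℝ)) := by
  rw [segRange, convexHull_pair]

def segPath : ConvexIntegralPath where
  N := 1
  p := segP
  inj := by
    intro i j h
    fin_cases i <;> fin_cases j <;> simp_all [segP, Prod.ext_iff]
  nonneg := by
    intro i; fin_cases i <;> exact ⟨by simp [segP], by simp [segP]⟩
  start_on_axis := rfl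
  end_on_axis := rfl
  clockwise := by
    intro i j
    rcases fin3_cases i with rfl|rfl|rfl <;> rcases fin3_cases j with rfl|rfl|rfl <;>
      simp only [show ((0:Fin 3)+1) = 1 from rfl, show ((1:Fin 3)+1) = 2 from rfl,
        show ((2:Fin 3)+1) = 0 from rfl, segV0, segV1, segV2, cross,
        Prod.fst_sub, Prod.snd_sub] <;>
      norm_num
  boundary := by
    intro z hz
    have hcl : IsClosed (convexHull ℝ (Set.range (closedVerts segP))) :=
      (Set.finite_range _).isClosed_convexHull (𝕜 := ℝ)
    have h1 := hz.1
    rw [hcl.closure_eq, segHull] at h1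
    apply Set.mem_iUnion.2 ⟨1, ?_⟩
    rw [show ((1:Fin 3)+1) = 2 from rfl, segV1, segV2]
    exact h1

end PointSeg

section Lengths

lemma pathLength_eq (a : ℝ) (ha : 0 < a) (Λ : ConvexIntegralPath) :
    pathLength {v : ℝ × ℝ | 0 ≤ v.1 ∧ 0 ≤ v.2 ∧ v.1 + v.2 ≤ a} Λ = a * (intLen Λ : ℝ) := by
  rw [pathLength, intLen]
  push_cast
  rw [Finset.mul_sum]
  apply Finset.sum_congr rfl
  intro i _
  rw [dualNorm_tri a ha]

lemma triP_0 (c r : ℤ) : triP c r 0 = (0, c) := rfl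
lemma triP_1 (c r : ℤ) : triP c r 1 = (r, 0) := rfl
lemma segP_0 : segP 0 = (0, 0) := rfl
lemma segP_1 : segP 1 = (1, 0) := rfl

lemma intLen_triPath (c r : ℤ) (hc : 1 ≤ c) (hr : 1 ≤ r) (hcr : c ≤ r) :
    intLen (triPath c r hc hr hcr) = r := by
  show (∑ i : Fin 1, max |(triP c r i.succ).1 - (triP c r i.castSucc).1|
    |(triP c r i.succ).2 - (triP c r i.castSucc).2|) = r
  rw [Fin.sum_univ_one]
  rw [show ((0:Fin 1).succ) = (1:Fin 2) from rfl, show ((0:Fin 1).castSucc) = (0:Fin 2) from rfl]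
  rw [triP_0, triP_1]
  show max |r - 0| |0 - c| = r
  rw [sub_zero, zero_sub, abs_neg, abs_of_nonneg (by omega : (0:ℤ) ≤ r),
    abs_of_nonneg (by omega : (0:ℤ) ≤ c)]
  omega

lemma intLen_segPath : intLen segPath = 1 := by
  show (∑ i : Fin 1, max |(segP i.succ).1 - (segP i.castSucc).1|
    |(segP i.succ).2 - (segP i.castSucc).2|) = 1
  rw [Fin.sum_univ_one]
  rw [show ((0:Fin 1).succ) = (1:Fin 2) from rfl, show ((0:Fin 1).castSucc) = (0:Fin 2) from rfl]
  rw [segP_0, segP_1]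
  show max |1 - 0| |0 - 0| = 1
  norm_num

lemma intLen_pointPath : intLen pointPath = 0 := by
  show (∑ i : Fin 0, max |(pointP i.succ).1 - (pointP i.castSucc).1|
    |(pointP i.succ).2 - (pointP i.castSucc).2|) = 0
  simp

lemma intLen_quadPath (d t : ℤ) (ht : 1 ≤ t) (htd : t ≤ d - 1) :
    intLen (quadPath d t ht htd) = d := by
  show (∑ i : Fin 2, max |(quadP d t i.succ).1 - (quadP d t i.castSucc).1|
    |(quadP d t i.succ).2 - (quadP d t i.castSucc).2|) = d
  rw [Fin.sum_univ_two]
  rw [show ((0:Fin 2).succ) = (1:Fin 3) from rfl, show ((0:Fin 2).castSucc) = (0:Fin 3) from rfl,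
    show ((1:Fin 2).succ) = (2:Fin 3) from rfl, show ((1:Fin 2).castSucc) = (1:Fin 3) from rfl]
  rw [quadP_0, quadP_1, quadP_2]
  show max |t - 0| |d - t - (d-1)| + max |d - t| |0 - (d - t)| = d
  rw [sub_zero, zero_sub, abs_neg]
  rw [abs_of_nonneg (by omega : (0:ℤ) ≤ t), abs_of_nonpos (by omega : d - t - (d-1) ≤ 0),
    abs_of_nonneg (by omega : (0:ℤ) ≤ d - t)]
  omega

end Lengths

section Counts

lemma count_pointPath : pointPath.latticePointCount = 1 := by
  rw [ConvexIntegralPath.latticePointCount]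
  have hreg : pointPath.region = {((0:ℝ),(0:ℝ))} := by
    rw [ConvexIntegralPath.region]
    show convexHull ℝ (Set.range (closedVerts pointP)) = _
    rw [pointRange, convexHull_singleton]
  rw [hreg]
  have : {q : ℤ × ℤ | (((q.1:ℝ), (q.2:ℝ)) : ℝ×ℝ) ∈ ({((0:ℝ),(0:ℝ))} : Set (ℝ×ℝ))}
      = {((0:ℤ),(0:ℤ))} := by
    ext q
    simp only [Set.mem_setOf_eq, Set.mem_singleton_iff, Prod.ext_iff]
    constructor
    · rintro ⟨h1, h2⟩; exact ⟨by exact_mod_cast h1, by exact_mod_cast h2⟩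
    · rintro ⟨h1, h2⟩; exact ⟨by exact_mod_cast h1, by exact_mod_cast h2⟩
  rw [this, Set.ncard_singleton]

lemma count_segPath : segPath.latticePointCount = 2 := by
  rw [ConvexIntegralPath.latticePointCount]
  have hreg : segPath.region = segment ℝ ((0:ℝ),(0:ℝ)) ((1:ℝ),(0:ℝ)) := segHull
  rw [hreg]
  have : {q : ℤ × ℤ | (((q.1:ℝ), (q.2:ℝ)) : ℝ×ℝ) ∈ segment ℝ ((0:ℝ),(0:ℝ)) ((1:ℝ),(0:ℝ))}
      = {((0:ℤ),(0:ℤ)), ((1:ℤ),(0:ℤ))} := by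
    ext q
    simp only [Set.mem_setOf_eq, Set.mem_insert_iff, Set.mem_singleton_iff]
    rw [segment_eq_image]
    constructor
    · rintro ⟨θ, ⟨h0, h1⟩, hq⟩
      simp only [Prod.ext_iff, Prod.fst_add, Prod.snd_add, Prod.smul_fst, Prod.smul_snd,
        smul_eq_mul] at hq
      obtain ⟨hqx, hqy⟩ := hq
      have hy : (q.2 : ℝ) = 0 := by linarith [hqy]
      have hx : (q.1 : ℝ) = θ := by linarith [hqx]
      have hy' : q.2 = 0 := by exact_mod_cast hy
      have hx0 : (0:ℝ) ≤ (q.1:ℝ) := by rw [hx]; exact h0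
      have hx1 : (q.1:ℝ) ≤ 1 := by rw [hx]; exact h1
      have hq0 : 0 ≤ q.1 := by exact_mod_cast hx0
      have hq1 : q.1 ≤ 1 := by exact_mod_cast hx1
      interval_cases h : q.1
      · exact Or.inl (Prod.ext_iff.2 ⟨by simp [h], by simp [hy']⟩)
      · exact Or.inr (Prod.ext_iff.2 ⟨by simp [h], by simp [hy']⟩)
    · rintro (rfl|rfl)
      · exact ⟨0, ⟨le_refl _, zero_le_one⟩, by norm_num⟩
      · exact ⟨1, ⟨zero_le_one, le_refl _⟩, by norm_num⟩
  rw [this, Set.ncard_pair (by simp [Prod.ext_iff])]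

lemma latticeSet_triPath_dd (d : ℤ) (hd : 1 ≤ d) :
    {q : ℤ × ℤ | (((q.1:ℝ), (q.2:ℝ)) : ℝ×ℝ) ∈ (triPath d d hd hd le_rfl).region} = Tset d := by
  have hreg : (triPath d d hd hd le_rfl).region =
      {z : ℝ × ℝ | 0 ≤ z.1 ∧ 0 ≤ z.2 ∧ (d:ℝ) * z.1 + (d:ℝ) * z.2 ≤ (d:ℝ) * (d:ℝ)} :=
    tri_hull d d hd hd
  rw [hreg]
  ext q
  simp only [Set.mem_setOf_eq, Tset]
  constructor
  · rintro ⟨h1, h2, h3⟩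
    have g1 : 0 ≤ q.1 := by exact_mod_cast h1
    have g2 : 0 ≤ q.2 := by exact_mod_cast h2
    have g3 : d * q.1 + d * q.2 ≤ d * d := by exact_mod_cast h3
    refine ⟨g1, g2, ?_⟩
    nlinarith
  · rintro ⟨g1, g2, g3⟩
    refine ⟨by exact_mod_cast g1, by exact_mod_cast g2, ?_⟩
    have : d * q.1 + d * q.2 ≤ d * d := by nlinarith
    exact_mod_cast this

lemma latticeSet_triPath_sub (d : ℤ) (hd : 2 ≤ d) (h1 : 1 ≤ d - 1) (h2 : 1 ≤ d)
    (h3 : d - 1 ≤ d) :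
    {q : ℤ × ℤ | (((q.1:ℝ), (q.2:ℝ)) : ℝ×ℝ) ∈ (triPath (d-1) d h1 h2 h3).region}
      = Tset (d-1) ∪ {((d:ℤ), (0:ℤ))} := by
  have hreg : (triPath (d-1) d h1 h2 h3).region =
      {z : ℝ × ℝ | 0 ≤ z.1 ∧ 0 ≤ z.2 ∧ ((d:ℝ)-1) * z.1 + (d:ℝ) * z.2 ≤ ((d:ℝ)-1) * (d:ℝ)} := by
    have := tri_hull (d-1) d h1 h2
    push_cast at this
    exact this
  rw [hreg]
  ext q
  simp only [Set.mem_setOf_eq, Tset, Set.mem_union, Set.mem_singleton_iff, Prod.ext_iff]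
  constructor
  · rintro ⟨c1, c2, c3⟩
    have g1 : 0 ≤ q.1 := by exact_mod_cast c1
    have g2 : 0 ≤ q.2 := by exact_mod_cast c2
    have g3 : (d-1) * q.1 + d * q.2 ≤ (d-1) * d := by exact_mod_cast c3
    by_cases hcase : q.1 + q.2 ≤ d - 1
    · exact Or.inl ⟨g1, g2, hcase⟩
    · right
      push_neg at hcase
      have hy : q.2 = 0 := by nlinarith
      have hx : q.1 = d := by nlinarith
      exact ⟨hx, hy⟩
  · rintro (⟨g1, g2, g3⟩ | ⟨hx, hy⟩)
    · refine ⟨by exact_mod_cast g1, by exact_mod_cast g2, ?_⟩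
      have : (d-1) * q.1 + d * q.2 ≤ (d-1) * d := by nlinarith
      exact_mod_cast this
    · refine ⟨by rw [hx]; exact_mod_cast (by omega : (0:ℤ) ≤ d), by rw [hy]; norm_num, ?_⟩
      rw [hx, hy]
      push_cast
      ring_nf
      norm_num

lemma latticeSet_quadPath (d t : ℤ) (ht : 1 ≤ t) (htd : t ≤ d - 1) :
    {q : ℤ × ℤ | (((q.1:ℝ), (q.2:ℝ)) : ℝ×ℝ) ∈ (quadPath d t ht htd).region}
      = Tset (d-1) ∪ (fun x : ℤ => (x, d - x)) '' Set.Icc t d := by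
  have hreg : (quadPath d t ht htd).region = quadH d t := quad_hull d t ht htd
  rw [hreg]
  ext q
  simp only [Set.mem_setOf_eq, Tset, quadH, Set.mem_union, Set.mem_image, Set.mem_Icc,
    Prod.ext_iff]
  constructor
  · rintro ⟨c1, c2, c3, c4⟩
    have g1 : 0 ≤ q.1 := by exact_mod_cast c1
    have g2 : 0 ≤ q.2 := by exact_mod_cast c2
    have g3 : (t-1) * q.1 + t * q.2 ≤ t * (d-1) := by
      have : ((t:ℝ)-1) * q.1 + (t:ℝ) * q.2 ≤ (t:ℝ) * ((d:ℝ)-1) := c3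
      exact_mod_cast this
    have g4 : q.1 + q.2 ≤ d := by exact_mod_cast c4
    by_cases hcase : q.1 + q.2 ≤ d - 1
    · exact Or.inl ⟨g1, g2, hcase⟩
    · right
      have hsum : q.1 + q.2 = d := by omega
      have hxt : t ≤ q.1 := by nlinarith
      exact ⟨q.1, ⟨hxt, by omega⟩, rfl, by omega⟩
  · rintro (⟨g1, g2, g3⟩ | ⟨x, ⟨hx1, hx2⟩, hq1, hq2⟩)
    · refine ⟨by exact_mod_cast g1, by exact_mod_cast g2, ?_, ?_⟩
      · have : (t-1) * q.1 + t * q.2 ≤ t * (d-1) := by nlinarith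
        have h' : ((t:ℝ)-1) * q.1 + (t:ℝ) * q.2 ≤ (t:ℝ) * ((d:ℝ)-1) := by exact_mod_cast this
        exact h'
      · have : q.1 + q.2 ≤ d := by omega
        exact_mod_cast this
    · rw [← hq2, ← hq1]
      have c1 : (0:ℤ) ≤ x := by omega
      have c2 : (0:ℤ) ≤ d - x := by omega
      have c3 : (t-1) * x + t * (d - x) ≤ t * (d-1) := by nlinarith
      have c4 : x + (d - x) ≤ d := by omega
      refine ⟨by exact_mod_cast c1, by exact_mod_cast c2, ?_, by exact_mod_cast c4⟩
      have h' : ((t:ℝ)-1) * (x:ℝ) + (t:ℝ) * (((d - x : ℤ)):ℝ) ≤ (t:ℝ) * ((d:ℝ)-1) := by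
        exact_mod_cast c3
      push_cast at h' ⊢
      linarith

end Counts

/-- For the triangle `Ω = {(x,y) : x, y ≥ 0, x + y ≤ a}` (so that `X_Ω` is the ball `B⁴(a)`)
and `k ≥ 0`, the minimum of `ℓ_Ω(Λ)` over convex integral paths `Λ` with `L̂(Λ) = k + 1`
exists and equals `d·a`, where `d` is the unique nonnegative integer with
`d² + d ≤ 2k ≤ d² + 3d`. -/
theorem ball_capacity_formula (a : ℝ) (ha : 0 < a) (k d : ℕ)
    (hd : d ^ 2 + d ≤ 2 * k ∧ 2 * k ≤ d ^ 2 + 3 * d) :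
    IsLeast {x : ℝ | ∃ Λ : ConvexIntegralPath, Λ.latticePointCount = k + 1 ∧
        x = pathLength {v : ℝ × ℝ | 0 ≤ v.1 ∧ 0 ≤ v.2 ∧ v.1 + v.2 ≤ a} Λ}
      (d * a) := by
  obtain ⟨ee, hee⟩ := Nat.even_mul_succ_self d
  have hee' : d ^ 2 + d = ee + ee := by rw [← hee]; ring
  have hek : ee ≤ k := by linarith [hd.1]
  have hke : k ≤ ee + d := by linarith [hd.2]
  constructor
  · -- membership : construct a path
    rcases Nat.eq_zero_or_pos d with rfl | hd1
    · -- d = 0, k = 0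
      have hk0 : k = 0 := by omega
      subst hk0
      refine ⟨pointPath, by rw [count_pointPath], ?_⟩
      rw [pathLength_eq a ha, intLen_pointPath]
      norm_num
    rcases eq_or_lt_of_le hek with hke0 | hks
    · -- k = ee : smallest count for this d
      rcases Nat.lt_or_ge d 2 with hd2 | hd2
      · -- d = 1, k = 1 : segment path
        have hdd : d = 1 := by omega
        subst hdd
        have hk1 : k = 1 := by omega
        subst hk1
        refine ⟨segPath, by rw [count_segPath], ?_⟩
        rw [pathLength_eq a ha, intLen_segPath]
        norm_num [mul_comm]
      · -- d ≥ 2 : triangle (d-1, d)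
        have hd2' : (2:ℤ) ≤ (d:ℤ) := by exact_mod_cast hd2
        have h1 : (1:ℤ) ≤ (d:ℤ) - 1 := by omega
        have h2 : (1:ℤ) ≤ (d:ℤ) := by omega
        have h3 : (d:ℤ) - 1 ≤ (d:ℤ) := by omega
        refine ⟨triPath ((d:ℤ)-1) (d:ℤ) h1 h2 h3, ?_, ?_⟩
        · rw [ConvexIntegralPath.latticePointCount,
            latticeSet_triPath_sub (d:ℤ) hd2' h1 h2 h3]
          have hdisj : Disjoint (Tset ((d:ℤ)-1)) ({((d:ℤ), (0:ℤ))} : Set (ℤ×ℤ)) := by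
            rw [Set.disjoint_singleton_right]
            rintro ⟨q1, q2, q3⟩
            dsimp only at q3
            omega
          rw [Set.ncard_union_eq hdisj (Tset_finite _) (Set.finite_singleton _),
            Set.ncard_singleton]
          have hcast : ((d:ℤ)-1) = ((d - 1 : ℕ) : ℤ) := by omega
          rw [hcast]
          have := Tset_ncard (d - 1)
          have harith : (d - 1 + 1) * (d - 1 + 2) = d * (d + 1) := by
            have e1 : d - 1 + 1 = d := by omega
            have e2 : d - 1 + 2 = d + 1 := by omega
            rw [e1, e2]
          rw [harith] at this
          have hdd : d * (d + 1) = d ^ 2 + d := by ring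
          omega
        · rw [pathLength_eq a ha, intLen_triPath]
          push_cast
          ring
    rcases eq_or_lt_of_le hke with hketop | hkm
    · -- k = ee + d : full triangle (d, d)
      have h1 : (1:ℤ) ≤ (d:ℤ) := by exact_mod_cast hd1
      refine ⟨triPath (d:ℤ) (d:ℤ) h1 h1 le_rfl, ?_, ?_⟩
      · rw [ConvexIntegralPath.latticePointCount, latticeSet_triPath_dd (d:ℤ) h1]
        have hcast : ((d:ℤ)) = ((d : ℕ) : ℤ) := rfl
        have := Tset_ncard d
        have hdd : (d + 1) * (d + 2) = d ^ 2 + 3 * d + 2 := by ring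
        omega
      · rw [pathLength_eq a ha, intLen_triPath]
        push_cast
        ring
    · -- middle case : quadrilateral with t = d - (k - ee), 1 ≤ t ≤ d - 1
      set s : ℕ := k - ee with hs
      have hs1 : 1 ≤ s := by omega
      have hsd : s ≤ d - 1 := by omega
      set t : ℕ := d - s with htdef
      have ht1 : 1 ≤ t := by omega
      have htd : t ≤ d - 1 := by omega
      have ht1' : (1:ℤ) ≤ (t:ℤ) := by exact_mod_cast ht1
      have htd' : (t:ℤ) ≤ (d:ℤ) - 1 := by omega
      refine ⟨quadPath (d:ℤ) (t:ℤ) ht1' htd', ?_, ?_⟩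
      · rw [ConvexIntegralPath.latticePointCount, latticeSet_quadPath (d:ℤ) (t:ℤ) ht1' htd']
        have hinj : Function.Injective (fun x : ℤ => (x, (d:ℤ) - x)) := by
          intro u v h
          simpa using (Prod.mk.injEq .. ▸ h).1
        have hdisj : Disjoint (Tset ((d:ℤ)-1))
            ((fun x : ℤ => (x, (d:ℤ) - x)) '' Set.Icc (t:ℤ) (d:ℤ)) := by
          rw [Set.disjoint_right]
          rintro z ⟨x, ⟨hx1, hx2⟩, rfl⟩ ⟨q1, q2, q3⟩
          simp only at q3
          omega
        have hfin : ((fun x : ℤ => (x, (d:ℤ) - x)) '' Set.Icc (t:ℤ) (d:ℤ)).Finite :=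
          ((Set.finite_Icc _ _).image _)
        rw [Set.ncard_union_eq hdisj (Tset_finite _) hfin]
        have himg : ((fun x : ℤ => (x, (d:ℤ) - x)) '' Set.Icc (t:ℤ) (d:ℤ)).ncard = s + 1 := by
          rw [Set.ncard_image_of_injective _ hinj, ← Finset.coe_Icc, Set.ncard_coe_finset,
            Int.card_Icc]
          omega
        rw [himg]
        have hcast : ((d:ℤ)-1) = ((d - 1 : ℕ) : ℤ) := by omega
        rw [hcast]
        have := Tset_ncard (d - 1)
        have harith : (d - 1 + 1) * (d - 1 + 2) = d * (d + 1) := by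
          have e1 : d - 1 + 1 = d := by omega
          have e2 : d - 1 + 2 = d + 1 := by omega
          rw [e1, e2]
        rw [harith] at this
        have hdd : d * (d + 1) = d ^ 2 + d := by ring
        omega
      · rw [pathLength_eq a ha, intLen_quadPath]
        push_cast
        ring
  · -- lower bound
    rintro x ⟨Λ, hcount, rfl⟩
    rw [pathLength_eq a ha Λ]
    have hm0 : 0 ≤ intLen Λ := intLen_nonneg Λ
    set n : ℕ := (intLen Λ).toNat with hn
    have hnz : intLen Λ = (n:ℤ) := (Int.toNat_of_nonneg hm0).symm
    have hsub : {q : ℤ × ℤ | (((q.1:ℝ), (q.2:ℝ)) : ℝ×ℝ) ∈ Λ.region} ⊆ Tset ((n:ℕ):ℤ) := by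
      intro q hq
      obtain ⟨h1, h2, h3⟩ := region_subset Λ hq
      dsimp only at h1 h2 h3
      rw [hnz] at h3
      exact ⟨by exact_mod_cast h1, by exact_mod_cast h2, by exact_mod_cast h3⟩
    have hkn : k + 1 ≤ (Tset ((n:ℕ):ℤ)).ncard := by
      rw [← hcount, ConvexIntegralPath.latticePointCount]
      exact Set.ncard_le_ncard hsub (Tset_finite _)
    have h2 : 2 * (Tset ((n:ℕ):ℤ)).ncard = (n+1)*(n+2) := Tset_ncard n
    have hdn : d ≤ n := by
      by_contra hlt
      push_neg at hlt
      have e2 : (n+1)*(n+2) ≤ d*(d+1) := Nat.mul_le_mul (by omega) (by omega)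
      have e3 : d*(d+1) = d^2 + d := by ring
      have e1 : 2*(k+1) ≤ (n+1)*(n+2) := by omega
      linarith [hd.1]
    have : (d:ℝ) ≤ ((intLen Λ : ℤ):ℝ) := by
      rw [hnz]
      exact_mod_cast hdn
    nlinarith
end
end
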